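/- In the digraph YES, there do not exist two arc-disjoint directed paths, one from c to b' and the other from a to a'. -/

import Mathlib

namespace TwoPairs

/-- Directed walks in a digraph given by its adjacency relation `A`. -/
inductive DWalk {V : Type*} (A : V → V → Prop) : V → V → Type _
  | nil (v : V) : DWalk A v v
  | cons {u v w : V} : A u v → DWalk A v w → DWalk A u w

variable {V : Type*} {A : V → V → Prop}

/-- The list of arcs of a directed walk. -/
def DWalk.arcs : {u v : V} → DWalk A u v → List (V × V)
  | _, _, .nil _ => []
  | u, _, .cons (v := m) _ q => (u, m) :: q.arcs

/-- A directed path is a directed walk with pairwise distinct arcs. -/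
def DWalk.IsTrail {u v : V} (P : DWalk A u v) : Prop := P.arcs.Nodup

/-- Two directed paths are arc-disjoint if they share no arc. -/
def ArcDisjoint {u v u' v' : V} (P : DWalk A u v) (Q : DWalk A u' v') : Prop :=
  ∀ e ∈ P.arcs, e ∉ Q.arcs

end TwoPairs

namespace TwoPairs

/-- The vertices of the digraph `YES`. -/
inductive VYES : Type
  | a | b | c | a' | b' | c'
  | p1 | p2 | p3 | p4 | p5 | p6
  deriving DecidableEq

/-- The arcs of the digraph `YES`. -/
def arcsYES : List (VYES × VYES) :=
  [(.a,.p1),(.b,.p1),(.c,.p3),(.p1,.p2),(.p3,.p2),(.p2,.p5),(.p1,.p4),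
   (.p3,.p6),(.p5,.p4),(.p5,.p6),(.p4,.b'),(.p6,.c'),(.p6,.a')]

/-- Adjacency relation of `YES`. -/
def AdjYES (x y : VYES) : Prop := (x, y) ∈ arcsYES

/-- The vertices of the digraph `NO`. -/
inductive VNO : Type
  | a | b | c | a' | b' | c'
  | m1 | m2
  deriving DecidableEq

/-- The arcs of the digraph `NO`. -/
def arcsNO : List (VNO × VNO) :=
  [(.a,.m1),(.b,.m1),(.m1,.m2),(.m1,.b'),(.c,.m2),(.m2,.c'),(.m2,.a')]

/-- Adjacency relation of `NO`. -/
def AdjNO (x y : VNO) : Prop := (x, y) ∈ arcsNO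

end TwoPairs

namespace TwoPairs

lemma deadB' : ∀ {u v}, DWalk AdjYES u v → v = VYES.b' →
    (u = VYES.p6 ∨ u = VYES.c' ∨ u = VYES.a') → False := by
  intro u v W
  induction W with
  | nil w => rintro rfl h; simp at h
  | cons h W ih =>
    rintro rfl hu
    rcases hu with rfl | rfl | rfl
    · simp [AdjYES, arcsYES] at h
      rcases h with rfl | rfl
      · exact ih rfl (Or.inr (Or.inl rfl))
      · exact ih rfl (Or.inr (Or.inr rfl))
    · simp [AdjYES, arcsYES] at h
    · simp [AdjYES, arcsYES] at h

lemma deadA' : ∀ {u v}, DWalk AdjYES u v → v = VYES.a' →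
    (u = VYES.p4 ∨ u = VYES.b' ∨ u = VYES.c') → False := by
  intro u v W
  induction W with
  | nil w => rintro rfl h; simp at h
  | cons h W ih =>
    rintro rfl hu
    rcases hu with rfl | rfl | rfl
    · simp [AdjYES, arcsYES] at h
      subst h; exact ih rfl (Or.inr (Or.inl rfl))
    · simp [AdjYES, arcsYES] at h
    · simp [AdjYES, arcsYES] at h

lemma keyP : ∀ {u v}, (W : DWalk AdjYES u v) → v = VYES.b' →
    (u = VYES.c ∨ u = VYES.p3 ∨ u = VYES.p2) → (VYES.p2, VYES.p5) ∈ W.arcs := by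
  intro u v W
  induction W with
  | nil w => rintro rfl h; simp at h
  | cons h W ih =>
    rintro rfl hu
    rcases hu with rfl | rfl | rfl
    · have h' := h; simp [AdjYES, arcsYES] at h'
      subst h'
      exact List.mem_cons_of_mem _ (ih rfl (Or.inr (Or.inl rfl)))
    · have h' := h; simp [AdjYES, arcsYES] at h'
      rcases h' with rfl | rfl
      · exact List.mem_cons_of_mem _ (ih rfl (Or.inr (Or.inr rfl)))
      · exact (deadB' W rfl (Or.inl rfl)).elim
    · have h' := h; simp [AdjYES, arcsYES] at h'
      subst h'
      exact List.mem_cons_self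

lemma keyQ : ∀ {u v}, (W : DWalk AdjYES u v) → v = VYES.a' →
    (u = VYES.a ∨ u = VYES.p1 ∨ u = VYES.p2) → (VYES.p2, VYES.p5) ∈ W.arcs := by
  intro u v W
  induction W with
  | nil w => rintro rfl h; simp at h
  | cons h W ih =>
    rintro rfl hu
    rcases hu with rfl | rfl | rfl
    · have h' := h; simp [AdjYES, arcsYES] at h'
      subst h'
      exact List.mem_cons_of_mem _ (ih rfl (Or.inr (Or.inl rfl)))
    · have h' := h; simp [AdjYES, arcsYES] at h'
      rcases h' with rfl | rfl
      · exact List.mem_cons_of_mem _ (ih rfl (Or.inr (Or.inr rfl)))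
      · exact (deadA' W rfl (Or.inl rfl)).elim
    · have h' := h; simp [AdjYES, arcsYES] at h'
      subst h'
      exact List.mem_cons_self

/-- in the digraph `YES`, there do not exist two arc-disjoint directed
paths, one from `c` to `b'` and the other from `a` to `a'`. -/
theorem statement16 :
    ¬ ∃ (P : DWalk AdjYES VYES.c VYES.b') (Q : DWalk AdjYES VYES.a VYES.a'),
      P.IsTrail ∧ Q.IsTrail ∧ ArcDisjoint P Q := by
  rintro ⟨P, Q, _, _, hD⟩
  exact hD _ (keyP P rfl (Or.inl rfl)) (keyQ Q rfl (Or.inl rfl))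

end TwoPairs
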